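/- Let D₀ ∈ ℝ^{m×p} with restricted isometry constant δ_k(D₀) < 1 and let 0 ≤ t < √(1 − δ_k(D₀)). Set C_t = 1/(√(1−δ_k(D₀)) − t). For any W with unit-norm columns orthogonal to the corresponding columns of D₀, any unit v ∈ ℝ^p, any 0 ≤ t' ≤ t and any J with |J| = k, the matrix D_J(t')ᵀ D_J(t') is invertible and: ‖D_J(t')‖₂ ≤ C_t, ‖(D_J(t')ᵀD_J(t'))^{-1}‖₂ ≤ C_t², and ‖D_J(t')·(D_J(t')ᵀD_J(t'))^{-1}‖₂ ≤ C_t. -/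

import Mathlib

open Real Matrix

noncomputable def l2norm {ι : Type*} [Fintype ι] (x : ι → ℝ) : ℝ :=
  Real.sqrt (∑ i, (x i) ^ 2)

section l2aux
variable {ι : Type*} [Fintype ι]

lemma l2norm_nonneg (x : ι → ℝ) : 0 ≤ l2norm x := Real.sqrt_nonneg _

lemma l2norm_sq (x : ι → ℝ) : l2norm x ^ 2 = ∑ i, x i ^ 2 :=
  Real.sq_sqrt (Finset.sum_nonneg fun _ _ => sq_nonneg _)

lemma l2norm_eq_norm (x : ι → ℝ) :
    l2norm x = ‖(WithLp.equiv 2 (ι → ℝ)).symm x‖ := by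
  rw [EuclideanSpace.norm_eq]
  simp [l2norm, sq_abs]

lemma l2norm_add_le (x y : ι → ℝ) :
    l2norm (x + y) ≤ l2norm x + l2norm y := by
  simp only [l2norm_eq_norm]
  rw [show (WithLp.equiv 2 (ι → ℝ)).symm (x + y)
      = (WithLp.equiv 2 (ι → ℝ)).symm x + (WithLp.equiv 2 (ι → ℝ)).symm y from rfl]
  exact norm_add_le _ _

lemma l2norm_sum_le {κ : Type*} [Fintype κ] (f : κ → ι → ℝ) :
    l2norm (∑ j, f j) ≤ ∑ j, l2norm (f j) := by
  simp only [l2norm_eq_norm]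
  rw [show (WithLp.equiv 2 (ι → ℝ)).symm (∑ j, f j)
      = ∑ j, (WithLp.equiv 2 (ι → ℝ)).symm (f j) from WithLp.toLp_sum (p := 2) (s := Finset.univ) (f := f)]
  exact norm_sum_le _ _

lemma l2norm_smul (c : ℝ) (x : ι → ℝ) :
    l2norm (c • x) = |c| * l2norm x := by
  simp only [l2norm_eq_norm]
  rw [show (WithLp.equiv 2 (ι → ℝ)).symm (c • x) = c • (WithLp.equiv 2 (ι → ℝ)).symm x from rfl,
    norm_smul, Real.norm_eq_abs]

lemma l2norm_neg (x : ι → ℝ) : l2norm (-x) = l2norm x := by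
  simp [l2norm]

lemma l2norm_pos {x : ι → ℝ} (hx : x ≠ 0) : 0 < l2norm x := by
  rcases (l2norm_nonneg x).lt_or_eq with h | h
  · exact h
  · exfalso
    apply hx
    have h0 : ∑ i, x i ^ 2 ≤ 0 := Real.sqrt_eq_zero'.1 h.symm
    have h1 : ∑ i, x i ^ 2 = 0 :=
      le_antisymm h0 (Finset.sum_nonneg fun _ _ => sq_nonneg _)
    funext i
    have := (Finset.sum_eq_zero_iff_of_nonneg (fun i _ => sq_nonneg (x i))).1 h1 i
      (Finset.mem_univ i)
    exact pow_eq_zero_iff two_ne_zero |>.1 this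

lemma dot_le_l2 (x y : ι → ℝ) : ∑ i, x i * y i ≤ l2norm x * l2norm y := by
  calc ∑ i, x i * y i ≤ |∑ i, x i * y i| := le_abs_self _
    _ = Real.sqrt ((∑ i, x i * y i) ^ 2) := (Real.sqrt_sq_eq_abs _).symm
    _ ≤ Real.sqrt ((∑ i, x i ^ 2) * ∑ i, y i ^ 2) :=
        Real.sqrt_le_sqrt (Finset.sum_mul_sq_le_sq_mul_sq Finset.univ x y)
    _ = l2norm x * l2norm y := by
        rw [Real.sqrt_mul (Finset.sum_nonneg fun _ _ => sq_nonneg _)]; rfl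

lemma l2norm_abs (x : ι → ℝ) : l2norm (fun i => |x i|) = l2norm x := by
  simp [l2norm, sq_abs]

end l2aux

/-- Submatrix of the columns of `D` indexed by `J`. -/
def colSub {m p : ℕ} (D : Matrix (Fin m) (Fin p) ℝ) (J : Finset (Fin p)) :
    Matrix (Fin m) {j // j ∈ J} ℝ := fun i j => D i j.1

/-- Gram matrix of the columns of `D` indexed by `J`. -/
def gram {m p : ℕ} (D : Matrix (Fin m) (Fin p) ℝ) (J : Finset (Fin p)) :
    Matrix {j // j ∈ J} {j // j ∈ J} ℝ := (colSub D J)ᵀ * colSub D J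

/-- Uniform RIP-type bounds for perturbed dictionaries: if `δ_k(D₀) ≤ δ < 1` and
`t < √(1−δ)`, then for every perturbed dictionary `D(t')` with `0 ≤ t' ≤ t` and every
`J` of size `k`, the Gram matrix is invertible and, with `C_t = 1/(√(1−δ)−t)`,
`‖D_J(t')‖₂ ≤ C_t`, `‖(D_J(t')ᵀD_J(t'))⁻¹‖₂ ≤ C_t²`, and
`‖D_J(t')(D_J(t')ᵀD_J(t'))⁻¹‖₂ ≤ C_t`. -/
theorem stmt_12 {m p : ℕ} (k : ℕ) (D₀ W : Matrix (Fin m) (Fin p) ℝ) (v : Fin p → ℝ)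
    (δ : ℝ) (hδ1 : δ < 1)
    -- δ is an admissible RIP constant of order k for D₀:
    (hRIP : ∀ J : Finset (Fin p), J.card = k → ∀ z : {j // j ∈ J} → ℝ,
      (1 - δ) * (∑ j, (z j) ^ 2) ≤ ∑ i, ((colSub D₀ J).mulVec z i) ^ 2 ∧
      ∑ i, ((colSub D₀ J).mulVec z i) ^ 2 ≤ (1 + δ) * (∑ j, (z j) ^ 2))
    (hD : ∀ j, ∑ i, (D₀ i j) ^ 2 = 1)
    (hW : ∀ j, ∑ i, (W i j) ^ 2 = 1)
    (horth : ∀ j, ∑ i, W i j * D₀ i j = 0)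
    (hv : ∑ j, (v j) ^ 2 = 1)
    (t t' : ℝ) (ht0 : 0 ≤ t') (ht't : t' ≤ t) (ht : t < Real.sqrt (1 - δ))
    (Dt : Matrix (Fin m) (Fin p) ℝ)
    (hDt : ∀ i j, Dt i j = Real.cos (v j * t') * D₀ i j + Real.sin (v j * t') * W i j)
    (J : Finset (Fin p)) (hJ : J.card = k) :
    IsUnit (gram Dt J) ∧
    (∀ z : {j // j ∈ J} → ℝ,
      l2norm ((colSub Dt J).mulVec z) ≤ 1 / (Real.sqrt (1 - δ) - t) * l2norm z) ∧
    (∀ z : {j // j ∈ J} → ℝ,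
      l2norm ((gram Dt J)⁻¹.mulVec z) ≤ (1 / (Real.sqrt (1 - δ) - t)) ^ 2 * l2norm z) ∧
    (∀ z : {j // j ∈ J} → ℝ,
      l2norm ((colSub Dt J * (gram Dt J)⁻¹).mulVec z)
        ≤ 1 / (Real.sqrt (1 - δ) - t) * l2norm z) := by
  classical
  have h1δ : (0:ℝ) < 1 - δ := by linarith
  have htt : 0 ≤ t := le_trans ht0 ht't
  set a := Real.sqrt (1 - δ) with ha
  have hat : 0 < a - t := sub_pos.2 ht
  rcases isEmpty_or_nonempty {j // j ∈ J} with hempty | hne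
  · -- empty index set: everything is trivial
    have hz : ∀ w : {j // j ∈ J} → ℝ, l2norm w = 0 := by
      intro w; simp [l2norm]
    have hz0 : l2norm (0 : Fin m → ℝ) = 0 := by simp [l2norm]
    have hmv : ∀ z : {j // j ∈ J} → ℝ, (colSub Dt J).mulVec z = 0 := by
      intro z; ext i; simp [Matrix.mulVec, dotProduct]
    have hmv2 : ∀ z : {j // j ∈ J} → ℝ,
        (colSub Dt J * (gram Dt J)⁻¹).mulVec z = 0 := by
      intro z; ext i; simp [Matrix.mulVec, dotProduct]
    refine ⟨?_, ?_, ?_, ?_⟩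
    · rw [Matrix.isUnit_iff_isUnit_det, Matrix.det_isEmpty]; exact isUnit_one
    · intro z; rw [hmv z, hz0, hz z, mul_zero]
    · intro z; rw [hz _, hz z, mul_zero]
    · intro z; rw [hmv2 z, hz0, hz z, mul_zero]
  · -- main case
    obtain ⟨j₀⟩ := hne
    -- δ is nonnegative
    have hδ0 : 0 ≤ δ := by
      have h := (hRIP J hJ (Pi.single (M := fun _ => ℝ) j₀ 1)).2
      have h1 : ∑ jj, (Pi.single (M := fun _ => ℝ) j₀ 1 jj) ^ 2 = 1 := by
        rw [Finset.sum_eq_single j₀]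
        · simp
        · intro b _ hb; simp [Pi.single_apply, hb]
        · intro h; exact absurd (Finset.mem_univ j₀) h
      have h2 : ∑ i, ((colSub D₀ J).mulVec (Pi.single (M := fun _ => ℝ) j₀ 1) i) ^ 2 = 1 := by
        simp only [Matrix.mulVec_single, mul_one, colSub]
        simpa [colSub] using hD j₀.1
      rw [h1, h2, mul_one] at h
      linarith
    -- column perturbation bound
    have hcol : ∀ jj : {j // j ∈ J},
        l2norm (fun i => Dt i jj.1 - D₀ i jj.1) ≤ |v jj.1| * t' := by
      intro jj
      set θ := v jj.1 * t' with hθ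
      have hsum : ∑ i, (Dt i jj.1 - D₀ i jj.1) ^ 2 = 2 - 2 * Real.cos θ := by
        have hterm : ∀ i, (Dt i jj.1 - D₀ i jj.1) ^ 2
            = (Real.cos θ - 1) ^ 2 * (D₀ i jj.1) ^ 2
              + (2 * (Real.cos θ - 1) * Real.sin θ) * (W i jj.1 * D₀ i jj.1)
              + Real.sin θ ^ 2 * (W i jj.1) ^ 2 := by
          intro i; rw [hDt]; ring
        rw [Finset.sum_congr rfl fun i _ => hterm i]
        rw [Finset.sum_add_distrib, Finset.sum_add_distrib, ← Finset.mul_sum, ← Finset.mul_sum,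
          ← Finset.mul_sum, hD, hW, horth]
        nlinarith [Real.sin_sq_add_cos_sq θ]
      have h2 : 2 - 2 * Real.cos θ ≤ θ ^ 2 := by
        have := Real.one_sub_sq_div_two_le_cos (x := θ)
        linarith
      calc l2norm (fun i => Dt i jj.1 - D₀ i jj.1)
          = Real.sqrt (2 - 2 * Real.cos θ) := by rw [l2norm, hsum]
        _ ≤ Real.sqrt (θ ^ 2) := Real.sqrt_le_sqrt h2
        _ = |θ| := Real.sqrt_sq_eq_abs θ
        _ = |v jj.1| * t' := by rw [hθ, abs_mul, abs_of_nonneg ht0]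
    -- restricted v has norm at most 1
    have hvJ : Real.sqrt (∑ jj : {j // j ∈ J}, (v jj.1) ^ 2) ≤ 1 := by
      have h1 : ∑ jj : {j // j ∈ J}, (v jj.1) ^ 2 = ∑ j ∈ J, (v j) ^ 2 :=
        Finset.sum_coe_sort J (fun j => (v j) ^ 2)
      have h2 : ∑ j ∈ J, (v j) ^ 2 ≤ ∑ j, (v j) ^ 2 :=
        Finset.sum_le_sum_of_subset_of_nonneg (Finset.subset_univ J)
          (fun j _ _ => sq_nonneg _)
      rw [h1]
      calc Real.sqrt (∑ j ∈ J, (v j) ^ 2) ≤ Real.sqrt (∑ j, (v j) ^ 2) :=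
            Real.sqrt_le_sqrt h2
        _ = 1 := by rw [hv, Real.sqrt_one]
    -- perturbation operator bound
    have hΔ : ∀ z : {j // j ∈ J} → ℝ,
        l2norm ((colSub Dt J - colSub D₀ J).mulVec z) ≤ t * l2norm z := by
      intro z
      have hdec : (colSub Dt J - colSub D₀ J).mulVec z
          = ∑ jj : {j // j ∈ J}, z jj • (fun i => Dt i jj.1 - D₀ i jj.1) := by
        ext i
        rw [Finset.sum_apply]
        simp [Matrix.mulVec, dotProduct, colSub, Matrix.sub_apply, mul_comm]
      calc l2norm ((colSub Dt J - colSub D₀ J).mulVec z)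
          ≤ ∑ jj : {j // j ∈ J}, l2norm (z jj • (fun i => Dt i jj.1 - D₀ i jj.1)) := by
            rw [hdec]; exact l2norm_sum_le _
        _ = ∑ jj : {j // j ∈ J}, |z jj| * l2norm (fun i => Dt i jj.1 - D₀ i jj.1) := by
            simp only [l2norm_smul]
        _ ≤ ∑ jj : {j // j ∈ J}, |z jj| * (|v jj.1| * t') := by
            refine Finset.sum_le_sum fun jj _ => ?_
            exact mul_le_mul_of_nonneg_left (hcol jj) (abs_nonneg _)
        _ = t' * ∑ jj : {j // j ∈ J}, |z jj| * |v jj.1| := by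
            rw [Finset.mul_sum]; exact Finset.sum_congr rfl fun jj _ => by ring
        _ ≤ t' * (l2norm z * 1) := by
            refine mul_le_mul_of_nonneg_left ?_ ht0
            calc ∑ jj : {j // j ∈ J}, |z jj| * |v jj.1|
                ≤ l2norm (fun jj => |z jj|) * l2norm (fun jj : {j // j ∈ J} => |v jj.1|) :=
                  dot_le_l2 _ _
              _ = l2norm z * Real.sqrt (∑ jj : {j // j ∈ J}, (v jj.1) ^ 2) := by
                  rw [l2norm_abs]; congr 1; simp [l2norm, sq_abs]
              _ ≤ l2norm z * 1 := mul_le_mul_of_nonneg_left hvJ (l2norm_nonneg z)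
        _ ≤ t * l2norm z := by
            rw [mul_one]
            exact mul_le_mul_of_nonneg_right ht't (l2norm_nonneg z)
    -- lower bound
    have hlow : ∀ z : {j // j ∈ J} → ℝ,
        (a - t) * l2norm z ≤ l2norm ((colSub Dt J).mulVec z) := by
      intro z
      have hrip := (hRIP J hJ z).1
      have hA0 : a * l2norm z ≤ l2norm ((colSub D₀ J).mulVec z) := by
        rw [ha]
        calc Real.sqrt (1 - δ) * l2norm z
            = Real.sqrt ((1 - δ) * ∑ jj, z jj ^ 2) := by
              rw [Real.sqrt_mul h1δ.le, l2norm]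
          _ ≤ Real.sqrt (∑ i, ((colSub D₀ J).mulVec z i) ^ 2) := Real.sqrt_le_sqrt hrip
          _ = l2norm ((colSub D₀ J).mulVec z) := rfl
      have htri : l2norm ((colSub D₀ J).mulVec z)
          ≤ l2norm ((colSub Dt J).mulVec z) + t * l2norm z := by
        have hrw : (colSub D₀ J).mulVec z
            = (colSub Dt J).mulVec z + (-((colSub Dt J - colSub D₀ J).mulVec z)) := by
          rw [Matrix.sub_mulVec]; ext i; simp
        calc l2norm ((colSub D₀ J).mulVec z)
            ≤ l2norm ((colSub Dt J).mulVec z)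
              + l2norm (-((colSub Dt J - colSub D₀ J).mulVec z)) := by
              rw [hrw]; exact l2norm_add_le _ _
          _ ≤ _ := by rw [l2norm_neg]; exact add_le_add le_rfl (hΔ z)
      have hexp : (a - t) * l2norm z = a * l2norm z - t * l2norm z := by ring
      linarith
    -- upper bound
    set b := Real.sqrt (1 + δ) with hb
    have hab1 : a * b ≤ 1 := by
      rw [ha, hb, ← Real.sqrt_mul h1δ.le]
      apply Real.sqrt_le_one.2
      nlinarith
    have hab2 : a ≤ b := Real.sqrt_le_sqrt (by linarith)
    have hbt : b + t ≤ 1 / (a - t) := by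
      rw [le_div_iff₀ hat]
      nlinarith [mul_nonneg htt (sub_nonneg.2 hab2), sq_nonneg t]
    have hup : ∀ z : {j // j ∈ J} → ℝ,
        l2norm ((colSub Dt J).mulVec z) ≤ 1 / (a - t) * l2norm z := by
      intro z
      have hrip := (hRIP J hJ z).2
      have hA0 : l2norm ((colSub D₀ J).mulVec z) ≤ b * l2norm z := by
        calc l2norm ((colSub D₀ J).mulVec z)
            = Real.sqrt (∑ i, ((colSub D₀ J).mulVec z i) ^ 2) := rfl
          _ ≤ Real.sqrt ((1 + δ) * ∑ jj, z jj ^ 2) := Real.sqrt_le_sqrt hrip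
          _ = b * l2norm z := by
              rw [Real.sqrt_mul (by linarith : (0:ℝ) ≤ 1 + δ), hb, l2norm]
      have htri : l2norm ((colSub Dt J).mulVec z)
          ≤ l2norm ((colSub D₀ J).mulVec z) + t * l2norm z := by
        have hrw : (colSub Dt J).mulVec z
            = (colSub D₀ J).mulVec z + ((colSub Dt J - colSub D₀ J).mulVec z) := by
          rw [Matrix.sub_mulVec]; ext i; simp
        calc l2norm ((colSub Dt J).mulVec z)
            ≤ l2norm ((colSub D₀ J).mulVec z)
              + l2norm ((colSub Dt J - colSub D₀ J).mulVec z) := by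
              rw [hrw]; exact l2norm_add_le _ _
          _ ≤ _ := add_le_add le_rfl (hΔ z)
      have h5 := mul_le_mul_of_nonneg_right hbt (l2norm_nonneg z)
      have hexp : (b + t) * l2norm z = b * l2norm z + t * l2norm z := by ring
      linarith
    -- quadratic form identity
    have hquad : ∀ w : {j // j ∈ J} → ℝ,
        w ⬝ᵥ ((gram Dt J).mulVec w) = l2norm ((colSub Dt J).mulVec w) ^ 2 := by
      intro w
      rw [_root_.gram, ← Matrix.mulVec_mulVec, Matrix.dotProduct_mulVec, Matrix.vecMul_transpose,
        l2norm_sq]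
      simp [dotProduct, sq]
    have hherm : (gram Dt J).IsHermitian := by
      rw [_root_.gram, ← Matrix.conjTranspose_eq_transpose_of_trivial]
      exact Matrix.isHermitian_conjTranspose_mul_self _
    have hPD : (gram Dt J).PosDef := by
      refine Matrix.PosDef.of_dotProduct_mulVec_pos hherm fun x hx => ?_
      have hx' : 0 < l2norm x := l2norm_pos hx
      have hxl := hlow x
      have hpos : 0 < (a - t) * l2norm x := mul_pos hat hx'
      have hst : star x = x := by
        funext i; exact star_trivial _
      rw [hst, hquad x]
      nlinarith
    have hunit : IsUnit (gram Dt J) := hPD.isUnit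
    have hGinvG : ∀ z : {j // j ∈ J} → ℝ,
        (gram Dt J).mulVec ((gram Dt J)⁻¹.mulVec z) = z := by
      intro z
      rw [Matrix.mulVec_mulVec,
        Matrix.mul_nonsing_inv _ ((Matrix.isUnit_iff_isUnit_det _).1 hunit),
        Matrix.one_mulVec]
    -- inverse Gram bound
    have hsecond : ∀ z : {j // j ∈ J} → ℝ,
        l2norm ((gram Dt J)⁻¹.mulVec z) ≤ (1 / (a - t)) ^ 2 * l2norm z := by
      intro z
      set w := (gram Dt J)⁻¹.mulVec z with hw
      have hGw : (gram Dt J).mulVec w = z := by rw [hw]; exact hGinvG z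
      have h1 : ((a - t) * l2norm w) ^ 2 ≤ l2norm ((colSub Dt J).mulVec w) ^ 2 := by
        have := hlow w
        nlinarith [l2norm_nonneg ((colSub Dt J).mulVec w),
          mul_nonneg hat.le (l2norm_nonneg w)]
      have h2 : l2norm ((colSub Dt J).mulVec w) ^ 2 = w ⬝ᵥ z := by
        rw [← hquad w, hGw]
      have h3 : w ⬝ᵥ z ≤ l2norm w * l2norm z := dot_le_l2 w z
      have hkey : (a - t) ^ 2 * l2norm w ^ 2 ≤ l2norm w * l2norm z := by nlinarith
      rcases eq_or_lt_of_le (l2norm_nonneg w) with h0 | h0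
      · rw [← h0]
        exact mul_nonneg (by positivity) (l2norm_nonneg z)
      · have h4 : l2norm w * (a - t) ^ 2 ≤ l2norm z :=
          le_of_mul_le_mul_right (by nlinarith) h0
        have hrw2 : (1 / (a - t)) ^ 2 * l2norm z = l2norm z / (a - t) ^ 2 := by
          field_simp
        rw [hrw2, le_div_iff₀ (by positivity)]
        linarith
    -- third bound
    have hthird : ∀ z : {j // j ∈ J} → ℝ,
        l2norm ((colSub Dt J * (gram Dt J)⁻¹).mulVec z) ≤ 1 / (a - t) * l2norm z := by
      intro z
      set w := (gram Dt J)⁻¹.mulVec z with hw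
      have hGw : (gram Dt J).mulVec w = z := by rw [hw]; exact hGinvG z
      have hrw : (colSub Dt J * (gram Dt J)⁻¹).mulVec z = (colSub Dt J).mulVec w := by
        rw [hw, Matrix.mulVec_mulVec]
      rw [hrw]
      have h2 : l2norm ((colSub Dt J).mulVec w) ^ 2 = w ⬝ᵥ z := by
        rw [← hquad w, hGw]
      have h3 : w ⬝ᵥ z ≤ l2norm w * l2norm z := dot_le_l2 w z
      have h4 := hsecond z
      have hz := l2norm_nonneg z
      have h5 : l2norm ((colSub Dt J).mulVec w) ^ 2 ≤ (1 / (a - t) * l2norm z) ^ 2 := by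
        calc l2norm ((colSub Dt J).mulVec w) ^ 2 = w ⬝ᵥ z := h2
          _ ≤ l2norm w * l2norm z := h3
          _ ≤ ((1 / (a - t)) ^ 2 * l2norm z) * l2norm z :=
              mul_le_mul_of_nonneg_right h4 hz
          _ = (1 / (a - t) * l2norm z) ^ 2 := by ring
      calc l2norm ((colSub Dt J).mulVec w)
          = Real.sqrt (l2norm ((colSub Dt J).mulVec w) ^ 2) :=
            (Real.sqrt_sq (l2norm_nonneg _)).symm
        _ ≤ Real.sqrt ((1 / (a - t) * l2norm z) ^ 2) := Real.sqrt_le_sqrt h5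
        _ = 1 / (a - t) * l2norm z := Real.sqrt_sq (by positivity)
    exact ⟨hunit, hup, hsecond, hthird⟩
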